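/- Let C ⊆ ℚ^n be a full-dimensional polyhedral cone and π : ℚ^n → ℚ^d the projection onto the last d coordinates. Then the fiber fan N(C, π(C)) — the common refinement of the inner normal fans of the fibers C_v for v ∈ π(C) — equals the common refinement of the cones π^∨(F), where F ranges over the faces of C^∨ and π^∨ is projection onto the first n-d coordinates of (ℚ^n)*. -/

import Mathlib

open Finset Set Pointwise

noncomputable section

variable {ι : Type*}

/-- The standard pairing between `ι → ℚ` and itself (functionals as vectors). -/
def dotp [Fintype ι] (w x : ι → ℚ) : ℚ := ∑ i, w i * x i

/-- The face of `P` on which the linear functional `w` attains its minimum. -/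
def faceOf [Fintype ι] (P : Set (ι → ℚ)) (w : ι → ℚ) : Set (ι → ℚ) :=
  {x | x ∈ P ∧ ∀ y ∈ P, dotp w x ≤ dotp w y}

/-- `F` is a (nonempty) face of `P`. -/
def IsFaceOf [Fintype ι] (P F : Set (ι → ℚ)) : Prop :=
  F.Nonempty ∧ ∃ w, F = faceOf P w

/-- The (closed) inner normal cone of a face `F` of `P`: all functionals minimized on `F`. -/
def normalCone [Fintype ι] (P F : Set (ι → ℚ)) : Set (ι → ℚ) :=
  {w | F ⊆ faceOf P w}

/-- The recession cone of `P`. -/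
def recCone (P : Set (ι → ℚ)) : Set (ι → ℚ) := {u | ∀ x ∈ P, x + u ∈ P}

/-- The dual cone of `C`. -/
def dualCone [Fintype ι] (C : Set (ι → ℚ)) : Set (ι → ℚ) := {w | ∀ x ∈ C, 0 ≤ dotp w x}

/-- The relative interior of a convex set `S`. -/
def relint (S : Set (ι → ℚ)) : Set (ι → ℚ) :=
  {x | x ∈ S ∧ ∀ y ∈ S, ∃ ε : ℚ, 0 < ε ∧ x + ε • (x - y) ∈ S}

/-- `P` is a polyhedron `{x | A x ≥ b}`. -/
def IsPolyhedron [Fintype ι] (P : Set (ι → ℚ)) : Prop :=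
  ∃ (r : ℕ) (A : Fin r → ι → ℚ) (b : Fin r → ℚ), P = {x | ∀ i, b i ≤ dotp (A i) x}

/-- `C` is a polyhedral cone `{x | A x ≥ 0}`. -/
def IsPolyhedralCone [Fintype ι] (C : Set (ι → ℚ)) : Prop :=
  ∃ (r : ℕ) (A : Fin r → ι → ℚ), C = {x | ∀ i, 0 ≤ dotp (A i) x}

/-- Two polyhedra are normally equivalent: they have the same inner normal fan,
i.e. the same support and the same partition of functionals by faces. -/
def normallyEquiv [Fintype ι] (P P' : Set (ι → ℚ)) : Prop :=
  (∀ w, (faceOf P w).Nonempty ↔ (faceOf P' w).Nonempty) ∧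
  ∀ w w', faceOf P w = faceOf P w' ↔ faceOf P' w = faceOf P' w'

/-- `F` is the smallest face of `P` containing the set `S`. -/
def IsSmallestFaceContaining [Fintype ι] (P S F : Set (ι → ℚ)) : Prop :=
  IsFaceOf P F ∧ S ⊆ F ∧ ∀ G, IsFaceOf P G → S ⊆ G → F ⊆ G

/-- The homogenization `P̃` of `P`: the closure in `(ι ⊕ Unit) → ℚ` of the cone over `P`
placed at height `1`. -/
def tildeSet (P : Set (ι → ℚ)) : Set ((ι ⊕ Unit) → ℚ) :=
  closure {p | ∃ x ∈ P, ∃ l : ℚ, 0 < l ∧ p = Sum.elim (l • x) (fun _ => l)}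
section FF
variable [Fintype ι]

lemma ff_dotp_comm (w x : ι → ℚ) : dotp w x = dotp x w := by
  simp [dotp, mul_comm]

lemma ff_dotp_add_left (w w' x : ι → ℚ) : dotp (w + w') x = dotp w x + dotp w' x := by
  simp [dotp, add_mul, Finset.sum_add_distrib]

lemma ff_dotp_add_right (w x x' : ι → ℚ) : dotp w (x + x') = dotp w x + dotp w x' := by
  simp [dotp, mul_add, Finset.sum_add_distrib]

lemma ff_dotp_smul_left (c : ℚ) (w x : ι → ℚ) : dotp (c • w) x = c * dotp w x := by
  simp [dotp, Finset.mul_sum, mul_assoc]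

lemma ff_dotp_smul_right (c : ℚ) (w x : ι → ℚ) : dotp w (c • x) = c * dotp w x := by
  simp [dotp, Finset.mul_sum, mul_left_comm]

@[simp] lemma ff_dotp_zero_left (x : ι → ℚ) : dotp 0 x = 0 := by simp [dotp]

@[simp] lemma ff_dotp_zero_right (x : ι → ℚ) : dotp x 0 = 0 := by simp [dotp]

lemma ff_dotp_neg_right (w x : ι → ℚ) : dotp w (-x) = -dotp w x := by
  simp [dotp, Finset.sum_neg_distrib]

lemma ff_dotp_sum_left {n : ℕ} (f : Fin n → ι → ℚ) (x : ι → ℚ) :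
    dotp (∑ i, f i) x = ∑ i, dotp (f i) x := by
  simp only [dotp, Finset.sum_apply, Finset.sum_mul]
  rw [Finset.sum_comm]

lemma ff_dotp_single [DecidableEq ι] (w : ι → ℚ) (j : ι) : dotp w (Pi.single j 1) = w j := by
  simp [dotp, Pi.single_apply, mul_ite]

/-- Homogeneous Farkas lemma (Bartl-style induction on the number of constraints). -/
lemma ff_farkas [DecidableEq ι] :
    ∀ (n : ℕ) (A : Fin n → ι → ℚ) (w : ι → ℚ),
      (∀ x, (∀ i, 0 ≤ dotp (A i) x) → 0 ≤ dotp w x) →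
      ∃ l : Fin n → ℚ, (∀ i, 0 ≤ l i) ∧ w = ∑ i, l i • A i := by
  intro n
  induction n with
  | zero =>
    intro A w h
    refine ⟨fun i => 0, fun i => le_refl _, ?_⟩
    have hz : ∀ x, dotp w x = 0 := by
      intro x
      have h1 := h x (fun i => i.elim0)
      have h2 := h (-x) (fun i => i.elim0)
      rw [show dotp w (-x) = -dotp w x from ff_dotp_neg_right w x] at h2
      linarith
    funext j
    have := hz (Pi.single j 1)
    rw [ff_dotp_single] at this
    simp [this]
  | succ n ih =>
    intro A w h
    set A' : Fin n → ι → ℚ := fun i => A i.castSucc with hA'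
    set a : ι → ℚ := A (Fin.last n) with ha
    by_cases hcase : ∀ x, (∀ i, 0 ≤ dotp (A' i) x) → 0 ≤ dotp w x
    · obtain ⟨l', hl', hw⟩ := ih A' w hcase
      refine ⟨Fin.snoc l' 0, ?_, ?_⟩
      · intro i
        refine Fin.lastCases ?_ ?_ i
        · simp
        · intro j; simp [Fin.snoc_castSucc]; exact hl' j
      · rw [Fin.sum_univ_castSucc]
        simp [Fin.snoc_castSucc, Fin.snoc_last, hw]
        rfl
    · push_neg at hcase
      obtain ⟨y, hy, hwy⟩ := hcase
      have hay : dotp a y < 0 := by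
        by_contra hge
        push_neg at hge
        have : ∀ i : Fin (n+1), 0 ≤ dotp (A i) y := by
          intro i
          refine Fin.lastCases ?_ ?_ i
          · exact hge
          · intro j; exact hy j
        exact absurd (h y this) (not_le.mpr hwy)
      set s : ℚ := dotp a y with hs
      set y' : ι → ℚ := (-s)⁻¹ • y with hy'
      have hsne : -s > 0 := by linarith
      have hay' : dotp a y' = -1 := by
        rw [hy', ff_dotp_smul_right, ← hs]
        field_simp
        rw [div_self (ne_of_lt hay)]
      have hAy' : ∀ i, 0 ≤ dotp (A' i) y' := by
        intro i
        rw [hy', ff_dotp_smul_right]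
        exact mul_nonneg (le_of_lt (inv_pos.mpr hsne)) (hy i)
      have hwy' : dotp w y' < 0 := by
        rw [hy', ff_dotp_smul_right]
        exact mul_neg_of_pos_of_neg (inv_pos.mpr hsne) hwy
      set A'' : Fin n → ι → ℚ := fun i => A' i + (dotp (A' i) y') • a with hA''
      set w'' : ι → ℚ := w + (dotp w y') • a with hw''def
      have hIH : ∀ x, (∀ i, 0 ≤ dotp (A'' i) x) → 0 ≤ dotp w'' x := by
        intro x hx
        set z : ι → ℚ := x + (dotp a x) • y' with hz
        have hzc : ∀ i : Fin (n+1), 0 ≤ dotp (A i) z := by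
          intro i
          refine Fin.lastCases ?_ ?_ i
          · rw [hz, ff_dotp_add_right, ff_dotp_smul_right, hay']
            simp
            exact le_rfl
          · intro j
            have := hx j
            rw [hA''] at this
            rw [hz, ff_dotp_add_right, ff_dotp_smul_right]
            rw [ff_dotp_add_left, ff_dotp_smul_left] at this
            show (0:ℚ) ≤ dotp (A' j) x + dotp a x * dotp (A' j) y'
            linarith [this]
        have := h z hzc
        rw [hz, ff_dotp_add_right, ff_dotp_smul_right] at this
        rw [hw''def, ff_dotp_add_left, ff_dotp_smul_left]
        linarith
      obtain ⟨l', hl', hkey⟩ := ih A'' w'' hIH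
      set ll : ℚ := (∑ i, l' i * dotp (A' i) y') - dotp w y' with hll
      have hllnn : 0 ≤ ll := by
        have h1 : 0 ≤ ∑ i, l' i * dotp (A' i) y' :=
          Finset.sum_nonneg fun i _ => mul_nonneg (hl' i) (hAy' i)
        rw [hll]; linarith
      refine ⟨Fin.snoc l' ll, ?_, ?_⟩
      · intro i
        refine Fin.lastCases ?_ ?_ i
        · simpa using hllnn
        · intro j; simpa using hl' j
      · rw [Fin.sum_univ_castSucc]
        simp only [Fin.snoc_castSucc, Fin.snoc_last]
        funext j
        have h1j := congrFun hkey j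
        simp only [hw''def, hA'', Pi.add_apply, Pi.smul_apply, Finset.sum_apply,
          smul_eq_mul] at h1j
        have hexp : ∑ i, l' i * (A' i j + dotp (A' i) y' * a j)
            = (∑ i, l' i * A' i j) + (∑ i, l' i * dotp (A' i) y') * a j := by
          rw [Finset.sum_mul, ← Finset.sum_add_distrib]
          exact Finset.sum_congr rfl fun i _ => by ring
        rw [hexp] at h1j
        simp only [Pi.add_apply, Finset.sum_apply, Pi.smul_apply, smul_eq_mul, hll]
        linarith [h1j]
end FF

section FF2
variable {κ : Type*} [Fintype ι] [Fintype κ]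

lemma ff_dotp_split (u z : (ι ⊕ κ) → ℚ) :
    dotp u z = dotp (u ∘ Sum.inl) (z ∘ Sum.inl) + dotp (u ∘ Sum.inr) (z ∘ Sum.inr) := by
  simp [dotp, Fintype.sum_sum_type, Function.comp]

lemma ff_elim_comp (y : (ι ⊕ κ) → ℚ) : Sum.elim (y ∘ Sum.inl) (y ∘ Sum.inr) = y := by
  funext x; cases x <;> rfl

/-- Affine Farkas lemma, obtained from the homogeneous one by homogenization. -/
lemma ff_farkas_affine [DecidableEq ι] (r : ℕ) (B : Fin r → ι → ℚ) (c : Fin r → ℚ)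
    (w : ι → ℚ) (γ : ℚ) (x₀ : ι → ℚ) (hx₀ : ∀ i, c i ≤ dotp (B i) x₀)
    (h : ∀ x, (∀ i, c i ≤ dotp (B i) x) → γ ≤ dotp w x) :
    ∃ l : Fin r → ℚ, (∀ i, 0 ≤ l i) ∧ w = ∑ i, l i • B i ∧ γ ≤ ∑ i, l i * c i := by
  classical
  set Ah : Fin (r+1) → (ι ⊕ Unit) → ℚ :=
    Fin.snoc (fun i => Sum.elim (B i) (fun _ => -(c i))) (Sum.elim 0 (fun _ => 1)) with hAh
  set wh : (ι ⊕ Unit) → ℚ := Sum.elim w (fun _ => -γ) with hwh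
  have hdot : ∀ (p : ι → ℚ) (q : ℚ) (z : (ι ⊕ Unit) → ℚ),
      dotp (Sum.elim p (fun _ => q)) z = dotp p (z ∘ Sum.inl) + q * z (Sum.inr ()) := by
    intro p q z
    rw [ff_dotp_split]
    congr 1
    simp [dotp]
  have hmain : ∀ z : (ι ⊕ Unit) → ℚ, (∀ i, 0 ≤ dotp (Ah i) z) → 0 ≤ dotp wh z := by
    intro z hz
    set x : ι → ℚ := z ∘ Sum.inl with hx
    set t : ℚ := z (Sum.inr ()) with ht
    have hts : 0 ≤ t := by
      have := hz (Fin.last r)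
      rw [hAh] at this
      simp only [Fin.snoc_last] at this
      rw [hdot] at this
      simpa using this
    have hi : ∀ i : Fin r, 0 ≤ dotp (B i) x - c i * t := by
      intro i
      have := hz i.castSucc
      rw [hAh] at this
      simp only [Fin.snoc_castSucc] at this
      rw [hdot] at this
      linarith
    rw [hwh, hdot]
    show 0 ≤ dotp w x + -γ * t
    rcases eq_or_lt_of_le hts with hteq | htpos
    · -- t = 0
      have hxnn : ∀ i, 0 ≤ dotp (B i) x := by
        intro i; have := hi i; rw [← hteq] at this; linarith
      have hwx : 0 ≤ dotp w x := by
        by_contra hneg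
        push_neg at hneg
        set s : ℚ := (dotp w x₀ - γ + 1) / (-(dotp w x)) with hs
        have hnum : 0 < dotp w x₀ - γ + 1 := by
          have := h x₀ hx₀; linarith
        have hspos : 0 < s := div_pos hnum (by linarith)
        have hfeas : ∀ i, c i ≤ dotp (B i) (x₀ + s • x) := by
          intro i
          rw [ff_dotp_add_right, ff_dotp_smul_right]
          have := mul_nonneg (le_of_lt hspos) (hxnn i)
          linarith [hx₀ i]
        have := h (x₀ + s • x) hfeas
        rw [ff_dotp_add_right, ff_dotp_smul_right] at this
        have hDne : dotp w x ≠ 0 := ne_of_lt hneg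
        have hsx : s * dotp w x = -(dotp w x₀ - γ + 1) := by
          rw [hs, div_mul_eq_mul_div, div_eq_iff (neg_ne_zero.mpr hDne)]
          ring
        rw [hsx] at this
        linarith
      rw [← hteq]
      linarith
    · -- t > 0
      have hfeas : ∀ i, c i ≤ dotp (B i) (t⁻¹ • x) := by
        intro i
        rw [ff_dotp_smul_right]
        have h1 := hi i
        have h2 : c i * t ≤ dotp (B i) x := by linarith
        have h3 := mul_le_mul_of_nonneg_left h2 (le_of_lt (inv_pos.mpr htpos))
        have h4 : t⁻¹ * (c i * t) = c i := by
          rw [mul_comm (c i) t, ← mul_assoc, inv_mul_cancel₀ (ne_of_gt htpos), one_mul]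
        linarith
      have := h (t⁻¹ • x) hfeas
      rw [ff_dotp_smul_right] at this
      have := mul_le_mul_of_nonneg_left this (le_of_lt htpos)
      rw [← mul_assoc, mul_inv_cancel₀ (ne_of_gt htpos), one_mul] at this
      linarith
  obtain ⟨lh, hlh, hweq⟩ := ff_farkas (r+1) Ah wh hmain
  set l : Fin r → ℚ := fun i => lh i.castSucc with hl
  have hsumval : ∀ p : ι ⊕ Unit, wh p = ∑ i, lh i * Ah i p := by
    intro p
    have := congrFun hweq p
    simpa [Finset.sum_apply] using this
  refine ⟨l, fun i => hlh i.castSucc, ?_, ?_⟩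
  · funext j
    have := hsumval (Sum.inl j)
    rw [Fin.sum_univ_castSucc] at this
    simp only [hAh, Fin.snoc_castSucc, Fin.snoc_last, hwh] at this
    simpa [Finset.sum_apply, hl] using this
  · have := hsumval (Sum.inr ())
    rw [Fin.sum_univ_castSucc] at this
    simp only [hAh, Fin.snoc_castSucc, Fin.snoc_last, hwh] at this
    simp only [Sum.elim_inr, mul_neg, mul_one] at this
    have hnn : 0 ≤ lh (Fin.last r) := hlh _
    have hrw : ∑ x : Fin r, -(lh x.castSucc * c x) = -∑ i : Fin r, l i * c i := by
      rw [← Finset.sum_neg_distrib]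
    rw [hrw] at this
    linarith
end FF2

section FF3
variable [Fintype ι]

lemma ff_zero_mem_dual (C : Set (ι → ℚ)) : (0 : ι → ℚ) ∈ dualCone C := by
  intro x _
  simp

lemma ff_mem_face_dual {C : Set (ι → ℚ)} {y u : ι → ℚ}
    (hyC : ∀ u' ∈ dualCone C, 0 ≤ dotp u' y) (hu : u ∈ dualCone C) (h0 : dotp u y = 0) :
    u ∈ faceOf (dualCone C) y := by
  refine ⟨hu, ?_⟩
  intro u' hu'
  rw [ff_dotp_comm y u, ff_dotp_comm y u', h0]
  exact hyC u' hu'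

lemma ff_face_dual_zero {C : Set (ι → ℚ)} {y u : ι → ℚ}
    (hu : u ∈ faceOf (dualCone C) y) (hnn : 0 ≤ dotp u y) : dotp u y = 0 := by
  have h1 := hu.2 0 (ff_zero_mem_dual C)
  rw [ff_dotp_comm y u] at h1
  simp only [ff_dotp_zero_right] at h1
  linarith

lemma ff_mem_of_face_nonempty (r : ℕ) (A : Fin r → ι → ℚ) (y u₀ : ι → ℚ)
    (hu₀ : u₀ ∈ faceOf (dualCone {x : ι → ℚ | ∀ i, 0 ≤ dotp (A i) x}) y) :
    ∀ i, 0 ≤ dotp (A i) y := by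
  intro i
  by_contra hneg
  push_neg at hneg
  have hAi : A i ∈ dualCone {x : ι → ℚ | ∀ i, 0 ≤ dotp (A i) x} := fun x hx => hx i
  have hsum : u₀ + A i ∈ dualCone {x : ι → ℚ | ∀ i, 0 ≤ dotp (A i) x} := by
    intro x hx
    rw [ff_dotp_add_left]
    exact add_nonneg (hu₀.1 x hx) (hx i)
  have h1 := hu₀.2 (u₀ + A i) hsum
  rw [ff_dotp_add_right] at h1
  rw [ff_dotp_comm y (A i)] at h1
  linarith

end FF3

/-- Strong LP duality for a fiber of a polyhedral cone: if `x₀'` minimizes `w` on the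
fiber over `v`, then there is a dual certificate `u` in the dual cone with
`u ∘ inl = w` vanishing on `(x₀', v)`. -/
lemma ff_strong_dual {m d : ℕ} (r : ℕ) (A : Fin r → (Fin m ⊕ Fin d) → ℚ) (v : Fin d → ℚ)
    (w x₀' : Fin m → ℚ)
    (hx₀ : ∀ i, 0 ≤ dotp (A i) (Sum.elim x₀' v))
    (hmin : ∀ y' : Fin m → ℚ, (∀ i, 0 ≤ dotp (A i) (Sum.elim y' v)) → dotp w x₀' ≤ dotp w y') :
    ∃ u : (Fin m ⊕ Fin d) → ℚ,
      u ∈ dualCone {x : (Fin m ⊕ Fin d) → ℚ | ∀ i, 0 ≤ dotp (A i) x} ∧ u ∘ Sum.inl = w ∧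
      dotp u (Sum.elim x₀' v) = 0 := by
  classical
  set B : Fin r → Fin m → ℚ := fun i => (A i) ∘ Sum.inl with hB
  set c : Fin r → ℚ := fun i => -(dotp ((A i) ∘ Sum.inr) v) with hc
  have htr : ∀ (i : Fin r) (y' : Fin m → ℚ),
      dotp (A i) (Sum.elim y' v) = dotp (B i) y' + dotp ((A i) ∘ Sum.inr) v := by
    intro i y'
    rw [ff_dotp_split, Sum.elim_comp_inl, Sum.elim_comp_inr]
  have hx₀' : ∀ i, c i ≤ dotp (B i) x₀' := by
    intro i
    have := hx₀ i
    rw [htr] at this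
    show -(dotp ((A i) ∘ Sum.inr) v) ≤ dotp (B i) x₀'
    linarith
  have hfeas : ∀ x : Fin m → ℚ, (∀ i, c i ≤ dotp (B i) x) → dotp w x₀' ≤ dotp w x := by
    intro x hx
    apply hmin
    intro i
    have h2 : -(dotp ((A i) ∘ Sum.inr) v) ≤ dotp (B i) x := hx i
    rw [htr]
    linarith
  obtain ⟨l, hl, hwB, hγ⟩ := ff_farkas_affine r B c w (dotp w x₀') x₀' hx₀' hfeas
  set u : (Fin m ⊕ Fin d) → ℚ := ∑ i, l i • A i with hu
  have hudual : u ∈ dualCone {x : (Fin m ⊕ Fin d) → ℚ | ∀ i, 0 ≤ dotp (A i) x} := by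
    intro x hx
    rw [hu, ff_dotp_sum_left]
    refine Finset.sum_nonneg fun i _ => ?_
    rw [ff_dotp_smul_left]
    exact mul_nonneg (hl i) (hx i)
  have huinl : u ∘ Sum.inl = w := by
    funext j
    rw [hwB]
    simp [hu, Finset.sum_apply, hB]
  have huinr : u ∘ Sum.inr = ∑ i, l i • ((A i) ∘ Sum.inr) := by
    funext j
    simp [hu, Finset.sum_apply]
  refine ⟨u, hudual, huinl, ?_⟩
  have hle : dotp u (Sum.elim x₀' v) ≤ 0 := by
    rw [ff_dotp_split, Sum.elim_comp_inl, Sum.elim_comp_inr, huinl, huinr, ff_dotp_sum_left]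
    have hsum : ∑ i, dotp (l i • ((A i) ∘ Sum.inr)) v = ∑ i, l i * dotp ((A i) ∘ Sum.inr) v :=
      Finset.sum_congr rfl fun i _ => ff_dotp_smul_left _ _ _
    rw [hsum]
    have hcs : ∑ i, l i * c i = -∑ i, l i * dotp ((A i) ∘ Sum.inr) v := by
      rw [← Finset.sum_neg_distrib]
      exact Finset.sum_congr rfl fun i _ => by rw [hc]; ring
    rw [hcs] at hγ
    linarith
  have hge : 0 ≤ dotp u (Sum.elim x₀' v) := hudual _ hx₀
  linarith

/-- the fiber fan `N(C, π(C))` equals the common refinement of the cones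
`π^∨(F)` for faces `F` of `C^∨`; expressed via equality, at each `w` in the common
support, of the minimal cell containing `w`. -/

theorem fiber_fan_eq_refinement_of_projected_faces (m d : ℕ)
    (C : Set ((Fin m ⊕ Fin d) → ℚ))
    (hC : IsPolyhedralCone C) (hfull : Submodule.span ℚ C = ⊤)
    (w : Fin m → ℚ)
    (hw : w ∈ (fun u : (Fin m ⊕ Fin d) → ℚ => u ∘ Sum.inl) '' dualCone C) :
    (⋂ v ∈ (fun x : (Fin m ⊕ Fin d) → ℚ => x ∘ Sum.inr) '' C,
        normalCone {x' : Fin m → ℚ | Sum.elim x' v ∈ C}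
          (faceOf {x' : Fin m → ℚ | Sum.elim x' v ∈ C} w))
      = ⋂₀ {S : Set (Fin m → ℚ) | ∃ G, IsFaceOf (dualCone C) G ∧
            S = (fun u : (Fin m ⊕ Fin d) → ℚ => u ∘ Sum.inl) '' G ∧ w ∈ S} := by
  classical
  obtain ⟨r, A, rfl⟩ := hC
  ext w'
  simp only [Set.mem_iInter, Set.mem_sInter, Set.mem_setOf_eq]
  constructor
  · -- LHS → RHS
    intro hL S hS
    obtain ⟨G, ⟨⟨u₀, hu₀G⟩, y₀, rfl⟩, rfl, hwS⟩ := hS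
    obtain ⟨u₁, hu₁, hu₁w⟩ := hwS
    have hy₀C : ∀ i, 0 ≤ dotp (A i) y₀ := ff_mem_of_face_nonempty r A y₀ u₀ hu₀G
    have hu₁dual : u₁ ∈ dualCone {x : (Fin m ⊕ Fin d) → ℚ | ∀ i, 0 ≤ dotp (A i) x} := hu₁.1
    have hu₁y₀ : dotp u₁ y₀ = 0 := ff_face_dual_zero hu₁ (hu₁dual y₀ hy₀C)
    set v : Fin d → ℚ := y₀ ∘ Sum.inr with hv
    set x₀' : Fin m → ℚ := y₀ ∘ Sum.inl with hx₀'
    have helim : Sum.elim x₀' v = y₀ := ff_elim_comp y₀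
    have hx₀face : x₀' ∈ faceOf {x' : Fin m → ℚ |
        Sum.elim x' v ∈ {x : (Fin m ⊕ Fin d) → ℚ | ∀ i, 0 ≤ dotp (A i) x}} w := by
      constructor
      · show ∀ i, 0 ≤ dotp (A i) (Sum.elim x₀' v)
        rw [helim]; exact hy₀C
      · intro y' hy'
        have h1 : 0 ≤ dotp u₁ (Sum.elim y' v) := hu₁dual _ hy'
        have h2 : dotp u₁ (Sum.elim x₀' v) = 0 := by rw [helim]; exact hu₁y₀
        rw [ff_dotp_split, Sum.elim_comp_inl, Sum.elim_comp_inr] at h1 h2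
        rw [← hu₁w]
        show dotp (u₁ ∘ Sum.inl) x₀' ≤ dotp (u₁ ∘ Sum.inl) y'
        linarith
    have hvC : v ∈ (fun x : (Fin m ⊕ Fin d) → ℚ => x ∘ Sum.inr) ''
        {x : (Fin m ⊕ Fin d) → ℚ | ∀ i, 0 ≤ dotp (A i) x} := ⟨y₀, hy₀C, rfl⟩
    have hface : x₀' ∈ faceOf {x' : Fin m → ℚ |
        Sum.elim x' v ∈ {x : (Fin m ⊕ Fin d) → ℚ | ∀ i, 0 ≤ dotp (A i) x}} w' :=
      (hL v hvC) hx₀face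
    obtain ⟨u', hu'dual, hu'w, hu'zero⟩ :=
      ff_strong_dual r A v w' x₀' hface.1 (fun y' hy' => hface.2 y' hy')
    refine ⟨u', ?_, hu'w⟩
    exact ff_mem_face_dual (fun u'' hu'' => hu'' y₀ hy₀C) hu'dual
      (by rw [← helim]; exact hu'zero)
  · -- RHS → LHS
    intro hR v hv x₀' hx₀'
    have hx₀C : ∀ i, 0 ≤ dotp (A i) (Sum.elim x₀' v) := hx₀'.1
    obtain ⟨u, hudual, huw, huzero⟩ :=
      ff_strong_dual r A v w x₀' hx₀C (fun y' hy' => hx₀'.2 y' hy')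
    set y : (Fin m ⊕ Fin d) → ℚ := Sum.elim x₀' v with hy
    have hyC : ∀ u'' ∈ dualCone {x : (Fin m ⊕ Fin d) → ℚ | ∀ i, 0 ≤ dotp (A i) x},
        0 ≤ dotp u'' y := fun u'' hu'' => hu'' y hx₀C
    have humem := ff_mem_face_dual hyC hudual huzero
    have hG : IsFaceOf (dualCone {x : (Fin m ⊕ Fin d) → ℚ | ∀ i, 0 ≤ dotp (A i) x})
        (faceOf (dualCone {x : (Fin m ⊕ Fin d) → ℚ | ∀ i, 0 ≤ dotp (A i) x}) y) :=
      ⟨⟨u, humem⟩, y, rfl⟩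
    obtain ⟨u', hu'face, hu'w⟩ := hR _ ⟨_, hG, rfl, ⟨u, humem, huw⟩⟩
    have hu'dual : u' ∈ dualCone {x : (Fin m ⊕ Fin d) → ℚ | ∀ i, 0 ≤ dotp (A i) x} :=
      hu'face.1
    have hu'zero : dotp u' y = 0 := ff_face_dual_zero hu'face (hu'dual y hx₀C)
    refine ⟨hx₀'.1, ?_⟩
    intro y' hy'
    have h1 : 0 ≤ dotp u' (Sum.elim y' v) := hu'dual _ hy'
    have h2 : dotp u' (Sum.elim x₀' v) = 0 := hu'zero
    rw [ff_dotp_split, Sum.elim_comp_inl, Sum.elim_comp_inr] at h1 h2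
    rw [← hu'w]
    show dotp (u' ∘ Sum.inl) x₀' ≤ dotp (u' ∘ Sum.inl) y'
    linarith
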